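/- The function C(u1,u2) = u1*u2 + (θ/(κ1*κ2*π²))·sin(κ1·π·u1)·sin(κ2·π·u2) on [0,1]² satisfies the copula conditions (boundary conditions and 2-increasingness) if and only if -1 ≤ θ ≤ 1. -/

import Mathlib

open Real

lemma sin_lip (x y : ℝ) : |Real.sin x - Real.sin y| ≤ |x - y| := by
  rw [Real.sin_sub_sin, abs_mul, abs_mul]
  have h1 := Real.abs_sin_le_abs (x := (x - y) / 2)
  have h2 := Real.abs_cos_le_one ((x + y) / 2)
  have h3 : |(x - y) / 2| = |x - y| / 2 := by rw [abs_div]; norm_num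
  have h0 : (0:ℝ) ≤ |Real.sin ((x - y)/2)| := abs_nonneg _
  have h4 : |(2:ℝ)| = 2 := by norm_num
  rw [h4]
  nlinarith [abs_nonneg (x - y)]

lemma key {θ : ℝ} (hθ : 1 < θ)
    (h : ∀ a b : ℝ, 0 < a → a ≤ 1 → 0 < b → b ≤ 1 →
      θ * (Real.sin a * Real.sin b) ≤ a * b) : False := by
  have hθ0 : 0 < θ := lt_trans one_pos hθ
  have hq : 0 < 1 - 1/θ := by
    have : 1/θ < 1 := by rw [div_lt_one hθ0]; exact hθ
    linarith
  set m : ℝ := min 1 (2 * (1 - 1/θ)) with hm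
  have hm0 : 0 < m := lt_min one_pos (by linarith)
  have hm1 : m ≤ 1 := min_le_left _ _
  set a : ℝ := Real.sqrt m with ha
  have ha2 : a ^ 2 = m := Real.sq_sqrt hm0.le
  have ha0 : 0 < a := Real.sqrt_pos.2 hm0
  have ha1 : a ≤ 1 := by
    rw [ha]; calc Real.sqrt m ≤ Real.sqrt 1 := Real.sqrt_le_sqrt hm1
    _ = 1 := Real.sqrt_one
  have hsin : a - a ^ 3 / 4 < Real.sin a := by
    have h6 := Real.sin_gt_sub_cube ha0
    have : 0 < a ^ 3 := by positivity
    linarith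
  have hsin0 : 0 < a - a ^ 3 / 4 := by nlinarith
  have hh := h a a ha0 ha1 ha0 ha1
  have hkey : θ * ((a - a ^ 3 / 4) * (a - a ^ 3 / 4)) < a * a := by
    calc θ * ((a - a ^ 3 / 4) * (a - a ^ 3 / 4))
        < θ * (Real.sin a * Real.sin a) := by
          apply mul_lt_mul_of_pos_left _ hθ0
          nlinarith
      _ ≤ a * a := hh
  -- θ * (1 - m/4)^2 < 1
  have h5 : θ * (1 - m / 4) ^ 2 < 1 := by
    have : a * a * (θ * (1 - m/4)^2) < a * a * 1 := by
      have e : a * a * (θ * (1 - m/4)^2) = θ * ((a - a^3/4) * (a - a^3/4)) := by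
        rw [← ha2]; ring
      rw [e, mul_one]; exact hkey
    exact lt_of_mul_lt_mul_left this (by positivity)
  rcases le_total 1 (2 * (1 - 1/θ)) with hc | hc
  · have : m = 1 := min_eq_left hc
    rw [this] at h5
    have hθ2 : 2 ≤ θ := by
      have h1θ : 1/θ ≤ 1/2 := by linarith
      rw [div_le_div_iff₀ hθ0 two_pos] at h1θ; linarith
    nlinarith
  · have hmeq : m = 2 * (1 - 1/θ) := min_eq_right hc
    have hθinv : 1/θ * θ = 1 := by field_simp
    rw [hmeq] at h5
    nlinarith [sq_nonneg (1 - 1/θ)]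

noncomputable def NM (κ1 κ2 : ℕ) (θ u1 u2 : ℝ) : ℝ :=
  u1 * u2 + θ / (κ1 * κ2 * Real.pi ^ 2) * Real.sin (κ1 * Real.pi * u1) * Real.sin (κ2 * Real.pi * u2)

theorem stmt_0 (κ1 κ2 : ℕ) (hκ1 : 1 ≤ κ1) (hκ2 : 1 ≤ κ2) (θ : ℝ) :
    ((∀ u ∈ Set.Icc (0:ℝ) 1,
        NM κ1 κ2 θ u 0 = 0 ∧ NM κ1 κ2 θ 0 u = 0 ∧
        NM κ1 κ2 θ u 1 = u ∧ NM κ1 κ2 θ 1 u = u) ∧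
      (∀ u1L ∈ Set.Icc (0:ℝ) 1, ∀ u1H ∈ Set.Icc (0:ℝ) 1,
       ∀ u2L ∈ Set.Icc (0:ℝ) 1, ∀ u2H ∈ Set.Icc (0:ℝ) 1,
        u1L ≤ u1H → u2L ≤ u2H →
        0 ≤ NM κ1 κ2 θ u1H u2H - NM κ1 κ2 θ u1L u2H
            - NM κ1 κ2 θ u1H u2L + NM κ1 κ2 θ u1L u2L))
    ↔ (-1 ≤ θ ∧ θ ≤ 1) := by
  have hπ := Real.pi_pos
  have hπ3 := Real.pi_gt_three
  have hk1 : (1:ℝ) ≤ (κ1:ℝ) := by exact_mod_cast hκ1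
  have hk2 : (1:ℝ) ≤ (κ2:ℝ) := by exact_mod_cast hκ2
  have hk1p : (0:ℝ) < κ1 := by linarith
  have hk2p : (0:ℝ) < κ2 := by linarith
  set K : ℝ := (κ1:ℝ) * κ2 * Real.pi ^ 2 with hK
  have hKp : 0 < K := by positivity
  constructor
  · rintro ⟨-, h2⟩
    constructor
    · by_contra hcon
      push_neg at hcon
      have hθ : 1 < -θ := by linarith
      refine key hθ (fun a b ha0 ha1 hb0 hb1 => ?_)
      set ε : ℝ := a / (κ1 * Real.pi) with hε
      set δ : ℝ := b / (κ2 * Real.pi) with hδ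
      have hεp : 0 < ε := by positivity
      have hδp : 0 < δ := by positivity
      have hε1 : ε ≤ 1 := by
        rw [hε, div_le_one (by positivity)]
        nlinarith
      have hδ1 : δ ≤ 1 := by
        rw [hδ, div_le_one (by positivity)]
        nlinarith
      have e1 : (κ1:ℝ) * Real.pi * ε = a := by
        rw [hε]; field_simp
      have e2 : (κ2:ℝ) * Real.pi * δ = b := by
        rw [hδ]; field_simp
      have h := h2 0 (by constructor <;> norm_num) ε ⟨hεp.le, hε1⟩
        0 (by constructor <;> norm_num) δ ⟨hδp.le, hδ1⟩ hεp.le hδp.le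
      simp only [NM, mul_zero, zero_mul, Real.sin_zero, add_zero, zero_add, sub_zero] at h
      rw [e1, e2] at h
      have h' : 0 ≤ ε * δ + θ / K * Real.sin a * Real.sin b := by
        convert h using 1 <;> ring
      have : -θ * (Real.sin a * Real.sin b) ≤ K * (ε * δ) := by
        have := mul_le_mul_of_nonneg_left (by linarith : -(θ / K * Real.sin a * Real.sin b) ≤ ε * δ) hKp.le
        calc -θ * (Real.sin a * Real.sin b)
            = K * -(θ / K * Real.sin a * Real.sin b) := by field_simp
          _ ≤ K * (ε * δ) := this
      calc -θ * (Real.sin a * Real.sin b) ≤ K * (ε * δ) := this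
        _ = a * b := by rw [hε, hδ, hK]; field_simp
    · by_contra hcon
      push_neg at hcon
      refine key hcon (fun a b ha0 ha1 hb0 hb1 => ?_)
      set ε : ℝ := a / (κ1 * Real.pi) with hε
      set δ : ℝ := b / (κ2 * Real.pi) with hδ
      have hεp : 0 < ε := by positivity
      have hδp : 0 < δ := by positivity
      have hεk : ε < 1 / κ1 := by
        rw [hε, div_lt_div_iff₀ (by positivity) hk1p]
        nlinarith
      have hδ1 : δ ≤ 1 := by
        rw [hδ, div_le_one (by positivity)]
        nlinarith
      have hik : (1:ℝ)/κ1 ≤ 1 := by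
        rw [div_le_one hk1p]; linarith
      have e1 : (κ1:ℝ) * Real.pi * ε = a := by rw [hε]; field_simp
      have e2 : (κ2:ℝ) * Real.pi * δ = b := by rw [hδ]; field_simp
      have eH : (κ1:ℝ) * Real.pi * (1/κ1) = Real.pi := by field_simp
      have eL : Real.sin ((κ1:ℝ) * Real.pi * (1/κ1 - ε)) = Real.sin a := by
        have : (κ1:ℝ) * Real.pi * (1/κ1 - ε) = Real.pi - a := by
          rw [mul_sub, eH, e1]
        rw [this, Real.sin_pi_sub]
      have h := h2 (1/κ1 - ε) ⟨by linarith, by linarith⟩ (1/κ1) ⟨by positivity, hik⟩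
        0 (by constructor <;> norm_num) δ ⟨hδp.le, hδ1⟩ (by linarith) hδp.le
      simp only [NM, mul_zero, zero_mul, Real.sin_zero, add_zero, sub_zero] at h
      rw [eH, eL, e2, Real.sin_pi] at h
      have h' : 0 ≤ ε * δ - θ / K * Real.sin a * Real.sin b := by
        convert h using 1 <;> ring
      have : θ * (Real.sin a * Real.sin b) ≤ K * (ε * δ) := by
        have := mul_le_mul_of_nonneg_left (by linarith : θ / K * Real.sin a * Real.sin b ≤ ε * δ) hKp.le
        calc θ * (Real.sin a * Real.sin b)
            = K * (θ / K * Real.sin a * Real.sin b) := by field_simp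
          _ ≤ K * (ε * δ) := this
      calc θ * (Real.sin a * Real.sin b) ≤ K * (ε * δ) := this
        _ = a * b := by rw [hε, hδ, hK]; field_simp
  · rintro ⟨hθ1, hθ2⟩
    have habs : |θ| ≤ 1 := abs_le.2 ⟨hθ1, hθ2⟩
    constructor
    · intro u hu
      refine ⟨?_, ?_, ?_, ?_⟩ <;>
        simp [NM, Real.sin_nat_mul_pi]
    · intro u1L _ u1H _ u2L _ u2H _ h12 h34
      simp only [NM]
      set s1L := Real.sin ((κ1:ℝ) * Real.pi * u1L)
      set s1H := Real.sin ((κ1:ℝ) * Real.pi * u1H)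
      set s2L := Real.sin ((κ2:ℝ) * Real.pi * u2L)
      set s2H := Real.sin ((κ2:ℝ) * Real.pi * u2H)
      have hs1 : |s1H - s1L| ≤ (κ1:ℝ) * Real.pi * (u1H - u1L) := by
        calc |s1H - s1L| ≤ |(κ1:ℝ) * Real.pi * u1H - (κ1:ℝ) * Real.pi * u1L| :=
              sin_lip _ _
          _ = (κ1:ℝ) * Real.pi * (u1H - u1L) := by
              rw [← mul_sub, abs_of_nonneg (mul_nonneg (by positivity) (by linarith))]
      have hs2 : |s2H - s2L| ≤ (κ2:ℝ) * Real.pi * (u2H - u2L) := by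
        calc |s2H - s2L| ≤ |(κ2:ℝ) * Real.pi * u2H - (κ2:ℝ) * Real.pi * u2L| :=
              sin_lip _ _
          _ = (κ2:ℝ) * Real.pi * (u2H - u2L) := by
              rw [← mul_sub, abs_of_nonneg (mul_nonneg (by positivity) (by linarith))]
      have hb : |θ / K * (s1H - s1L) * (s2H - s2L)| ≤ (u1H - u1L) * (u2H - u2L) := by
        have e : |θ / K * (s1H - s1L) * (s2H - s2L)|
            = |θ| * (|s1H - s1L| * |s2H - s2L|) / K := by
          rw [abs_mul, abs_mul, abs_div, abs_of_pos hKp]; ring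
        rw [e, div_le_iff₀ hKp]
        have hA1 : (0:ℝ) ≤ (κ1:ℝ) * Real.pi * (u1H - u1L) :=
          mul_nonneg (by positivity) (by linarith)
        have hA2 : (0:ℝ) ≤ (κ2:ℝ) * Real.pi * (u2H - u2L) :=
          mul_nonneg (by positivity) (by linarith)
        have h12' : |s1H - s1L| * |s2H - s2L|
            ≤ ((κ1:ℝ) * Real.pi * (u1H - u1L)) * ((κ2:ℝ) * Real.pi * (u2H - u2L)) :=
          mul_le_mul hs1 hs2 (abs_nonneg _) hA1
        have hfin : |θ| * (|s1H - s1L| * |s2H - s2L|)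
            ≤ 1 * (((κ1:ℝ) * Real.pi * (u1H - u1L)) * ((κ2:ℝ) * Real.pi * (u2H - u2L))) :=
          mul_le_mul habs h12' (mul_nonneg (abs_nonneg _) (abs_nonneg _)) one_pos.le
        calc |θ| * (|s1H - s1L| * |s2H - s2L|)
            ≤ 1 * (((κ1:ℝ) * Real.pi * (u1H - u1L)) * ((κ2:ℝ) * Real.pi * (u2H - u2L))) := hfin
          _ = (u1H - u1L) * (u2H - u2L) * K := by rw [hK]; ring
      have hneg := neg_abs_le (θ / K * (s1H - s1L) * (s2H - s2L))
      have key2 : 0 ≤ (u1H - u1L) * (u2H - u2L) + θ / K * (s1H - s1L) * (s2H - s2L) := by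
        linarith
      nlinarith [key2]
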